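/- If gcd(k, l) = 1, then for any residues i, j modulo l, the number of compositions (n₁,...,n_l) of k+l into l positive parts with Σ_α n_α·(l+1-α) ≡ i (mod l) equals the number of such compositions with the weighted sum ≡ j (mod l). -/
import Mathlib

/-- The number of compositions (n₁,...,n_l) of k+l into l positive parts whose
weighted sum n₁·l + n₂·(l-1) + ... + n_l·1 is congruent to i mod l. -/
def weightedCompCount (k l : ℕ) (i : ZMod l) : ℕ :=
  ((Finset.univ : Finset (Fin l → Fin (k + l + 1))).filter
    (fun n => (∀ a, 0 < (n a : ℕ)) ∧ (∑ a, (n a : ℕ)) = k + l ∧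
      ((∑ a : Fin l, (n a : ℕ) * (l - (a : ℕ)) : ℕ) : ZMod l) = i)).card

lemma fin_add_one_cast {l : ℕ} [NeZero l] (a : Fin l) :
    (((a + 1 : Fin l) : ℕ) : ZMod l) = ((a : ℕ) : ZMod l) + 1 := by
  rw [Fin.add_def]
  push_cast [ZMod.natCast_mod]
  simp

lemma fin_sub_one_cast {l : ℕ} [NeZero l] (a : Fin l) :
    (((a - 1 : Fin l) : ℕ) : ZMod l) = ((a : ℕ) : ZMod l) - 1 := by
  have := fin_add_one_cast (a - 1)
  rw [sub_add_cancel] at this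
  rw [this]; ring

lemma wsum_cast {m l : ℕ} [NeZero l] (n : Fin l → Fin m) :
    ((∑ a : Fin l, (n a : ℕ) * (l - (a : ℕ)) : ℕ) : ZMod l)
      = -∑ a : Fin l, ((n a : ℕ) : ZMod l) * ((a : ℕ) : ZMod l) := by
  push_cast
  rw [← Finset.sum_neg_distrib]
  refine Finset.sum_congr rfl fun a _ => ?_
  rw [Nat.cast_sub a.is_lt.le, ZMod.natCast_self, zero_sub, mul_neg]

lemma sum_shift_add {m l : ℕ} [NeZero l] (n : Fin l → Fin m) :
    ∑ a : Fin l, (n (a + 1) : ℕ) = ∑ a : Fin l, (n a : ℕ) :=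
  Fintype.sum_equiv (Equiv.addRight (1 : Fin l)) _ _ fun _ => rfl

lemma sum_shift_sub {m l : ℕ} [NeZero l] (n : Fin l → Fin m) :
    ∑ a : Fin l, (n (a - 1) : ℕ) = ∑ a : Fin l, (n a : ℕ) :=
  Fintype.sum_equiv (Equiv.subRight (1 : Fin l)) _ _ fun _ => rfl

lemma shift_sum_add {m l : ℕ} [NeZero l] (n : Fin l → Fin m) :
    ∑ a : Fin l, (((n (a + 1) : ℕ) : ZMod l) * ((a : ℕ) : ZMod l))
      = (∑ a : Fin l, ((n a : ℕ) : ZMod l) * ((a : ℕ) : ZMod l))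
        - ∑ a : Fin l, ((n a : ℕ) : ZMod l) := by
  rw [← Finset.sum_sub_distrib]
  refine Fintype.sum_equiv (Equiv.addRight (1 : Fin l)) _
    (fun b => ((n b : ℕ) : ZMod l) * ((b : ℕ) : ZMod l) - ((n b : ℕ) : ZMod l)) fun a => ?_
  simp only [Equiv.coe_addRight, fin_add_one_cast]
  ring

lemma shift_sum_sub {m l : ℕ} [NeZero l] (n : Fin l → Fin m) :
    ∑ a : Fin l, (((n (a - 1) : ℕ) : ZMod l) * ((a : ℕ) : ZMod l))
      = (∑ a : Fin l, ((n a : ℕ) : ZMod l) * ((a : ℕ) : ZMod l))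
        + ∑ a : Fin l, ((n a : ℕ) : ZMod l) := by
  rw [← Finset.sum_add_distrib]
  refine Fintype.sum_equiv (Equiv.subRight (1 : Fin l)) _
    (fun b => ((n b : ℕ) : ZMod l) * ((b : ℕ) : ZMod l) + ((n b : ℕ) : ZMod l)) fun a => ?_
  simp only [Equiv.subRight_apply, fin_sub_one_cast]
  ring

lemma step (k l : ℕ) [NeZero l] (i : ZMod l) :
    weightedCompCount k l i = weightedCompCount k l (i + k) := by
  unfold weightedCompCount
  refine Finset.card_bij' (fun n _ => fun a => n (a + 1)) (fun n _ => fun a => n (a - 1))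
    ?_ ?_ ?_ ?_
  · intro n hn
    simp only [Finset.mem_filter, Finset.mem_univ, true_and] at hn ⊢
    obtain ⟨h1, h2, h3⟩ := hn
    refine ⟨fun a => h1 _, by rw [sum_shift_add n]; exact h2, ?_⟩
    rw [wsum_cast] at h3 ⊢
    have h3' : (∑ a : Fin l, ((n a : ℕ) : ZMod l) * ((a : ℕ) : ZMod l)) = -i :=
      neg_eq_iff_eq_neg.mp h3
    have hs : (∑ a : Fin l, ((n a : ℕ) : ZMod l)) = (k : ZMod l) := by
      rw [← Nat.cast_sum, h2]; push_cast [ZMod.natCast_self]; ring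
    rw [shift_sum_add n, h3', hs]; ring
  · intro n hn
    simp only [Finset.mem_filter, Finset.mem_univ, true_and] at hn ⊢
    obtain ⟨h1, h2, h3⟩ := hn
    refine ⟨fun a => h1 _, by rw [sum_shift_sub n]; exact h2, ?_⟩
    rw [wsum_cast] at h3 ⊢
    have h3' : (∑ a : Fin l, ((n a : ℕ) : ZMod l) * ((a : ℕ) : ZMod l)) = -(i + k) :=
      neg_eq_iff_eq_neg.mp h3
    have hs : (∑ a : Fin l, ((n a : ℕ) : ZMod l)) = (k : ZMod l) := by
      rw [← Nat.cast_sum, h2]; push_cast [ZMod.natCast_self]; ring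
    rw [shift_sum_sub n, h3', hs]; ring
  · intro n hn; funext a; simp
  · intro n hn; funext a; simp

lemma iter (k l : ℕ) [NeZero l] (i : ZMod l) (m : ℕ) :
    weightedCompCount k l i = weightedCompCount k l (i + m * k) := by
  induction m with
  | zero => simp
  | succ m ih =>
      rw [ih, step k l (i + m * k)]
      congr 1
      push_cast
      ring

/-- If gcd(k,l)=1 then the number of compositions of k+l into l positive parts is
equidistributed over residues mod l of the weighted sum. -/
theorem weightedCompCount_eq (k l : ℕ) (hk : 0 < k) (hl : 0 < l)
    (h : Nat.gcd k l = 1) (i j : ZMod l) :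
    weightedCompCount k l i = weightedCompCount k l j := by
  haveI : NeZero l := ⟨hl.ne'⟩
  have hu : IsUnit (k : ZMod l) := (ZMod.isUnit_iff_coprime k l).mpr h
  set m : ℕ := ((j - i) * (k : ZMod l)⁻¹).val with hm
  have : i + (m : ZMod l) * k = j := by
    rw [hm, ZMod.natCast_val, ZMod.cast_id, mul_assoc, ZMod.inv_mul_of_unit _ hu]
    ring
  rw [iter k l i m, this]
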